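/- Let L : M^{m×d} → [0,∞] be Borel measurable. Suppose 0 ∈ int(dom L) and there exists C > 0 such that L(tξ + (1−t)ζ) ≤ C(1 + L(ξ) + L(ζ)) for all ξ, ζ ∈ M^{m×d} and t ∈ (0,1). Then there exists ρ₀ > 0 such that sup over the closed ball of radius ρ₀ centered at 0 of L is finite. -/

import Mathlib

open MeasureTheory ENNReal Pointwise

noncomputable instance {m d : ℕ} : MeasurableSpace (Matrix (Fin m) (Fin d) ℝ) := borel _
instance {m d : ℕ} : BorelSpace (Matrix (Fin m) (Fin d) ℝ) := ⟨rfl⟩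


attribute [local instance] Matrix.frobeniusNormedAddCommGroup

attribute [local instance] Matrix.frobeniusNormedSpace

instance frobBorelSpace {m d : ℕ} :
    @BorelSpace (Matrix (Fin m) (Fin d) ℝ)
    (@UniformSpace.toTopologicalSpace _ (@PseudoMetricSpace.toUniformSpace _
      (@SeminormedAddCommGroup.toPseudoMetricSpace _ (@NormedAddCommGroup.toSeminormedAddCommGroup _
        Matrix.frobeniusNormedAddCommGroup)))) _ := ⟨rfl⟩

instance frobOpensMeasurableSpace {m d : ℕ} :
    @OpensMeasurableSpace (Matrix (Fin m) (Fin d) ℝ)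
    (@UniformSpace.toTopologicalSpace _ (@PseudoMetricSpace.toUniformSpace _
      (@SeminormedAddCommGroup.toPseudoMetricSpace _ (@NormedAddCommGroup.toSeminormedAddCommGroup _
        Matrix.frobeniusNormedAddCommGroup)))) _ :=
  BorelSpace.opensMeasurable

instance frobLocallyCompactSpace {m d : ℕ} :
    @LocallyCompactSpace (Matrix (Fin m) (Fin d) ℝ)
    (@UniformSpace.toTopologicalSpace _ (@PseudoMetricSpace.toUniformSpace _
      (@SeminormedAddCommGroup.toPseudoMetricSpace _ (@NormedAddCommGroup.toSeminormedAddCommGroup _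
        Matrix.frobeniusNormedAddCommGroup)))) :=
  haveI : ProperSpace (Matrix (Fin m) (Fin d) ℝ) := FiniteDimensional.proper ℝ _
  locallyCompact_of_proper

/-- If `L : M^{m×d} → [0,∞]` is Borel measurable, `0 ∈ int(dom L)` and
`L(tξ+(1−t)ζ) ≤ C(1+L(ξ)+L(ζ))`, then `L` is bounded on some closed ball around `0`
(with respect to the Frobenius norm). -/
theorem bounded_on_closed_ball {m d : ℕ}
    (L : Matrix (Fin m) (Fin d) ℝ → ℝ≥0∞) (hLmeas : Measurable L)
    (hzero : (0 : Matrix (Fin m) (Fin d) ℝ) ∈ interior {ξ | L ξ < ⊤})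
    (C : ℝ≥0∞) (hC : 0 < C) (hCtop : C ≠ ⊤)
    (hL : ∀ ξ ζ : Matrix (Fin m) (Fin d) ℝ, ∀ t ∈ Set.Ioo (0:ℝ) 1,
      L (t • ξ + (1 - t) • ζ) ≤ C * (1 + L ξ + L ζ)) :
    ∃ ρ₀ : ℝ, 0 < ρ₀ ∧
      (⨆ ξ ∈ Metric.closedBall (0 : Matrix (Fin m) (Fin d) ℝ) ρ₀, L ξ) < ⊤ := by
  -- a ball around 0 inside the domain
  obtain ⟨r, hr, hball⟩ : ∃ r > 0, Metric.ball (0 : Matrix (Fin m) (Fin d) ℝ) r ⊆ {ξ | L ξ < ⊤} := by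
    rcases Metric.mem_nhds_iff.mp (mem_interior_iff_mem_nhds.mp hzero) with ⟨r, hr, h⟩
    exact ⟨r, hr, h⟩
  -- the sets Aₙ
  set A : ℕ → Set (Matrix (Fin m) (Fin d) ℝ) := fun n => {ξ | ξ ∈ Metric.ball (0 : Matrix (Fin m) (Fin d) ℝ) r ∧ L ξ ≤ n ∧ L (-ξ) ≤ n}
  have hAmeas : ∀ n, MeasurableSet (A n) := by
    intro n
    have hA : A n = Metric.ball (0 : Matrix (Fin m) (Fin d) ℝ) r ∩ (L ⁻¹' Set.Iic (n : ℝ≥0∞))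
        ∩ (Neg.neg ⁻¹' (L ⁻¹' Set.Iic (n : ℝ≥0∞))) := by
      ext x; simp [A, Set.mem_setOf_eq, and_assoc]
    rw [hA]
    exact (Metric.isOpen_ball.measurableSet.inter (hLmeas measurableSet_Iic)).inter
      ((hLmeas.comp measurable_neg) measurableSet_Iic)
  have hAunion : Metric.ball (0 : Matrix (Fin m) (Fin d) ℝ) r ⊆ ⋃ n, A n := by
    intro ξ hξ
    have h1 : L ξ < ⊤ := hball hξ
    have h2 : L (-ξ) < ⊤ := by
      apply hball
      simpa [Metric.mem_ball] using hξ
    obtain ⟨n1, hn1⟩ := ENNReal.exists_nat_gt h1.ne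
    obtain ⟨n2, hn2⟩ := ENNReal.exists_nat_gt h2.ne
    refine Set.mem_iUnion.mpr ⟨max n1 n2, hξ, ?_, ?_⟩
    · exact le_trans hn1.le (by exact_mod_cast Nat.cast_le.mpr (le_max_left n1 n2))
    · exact le_trans hn2.le (by exact_mod_cast Nat.cast_le.mpr (le_max_right n1 n2))
  -- a Haar measure
  letI : TopologicalSpace (Matrix (Fin m) (Fin d) ℝ) :=
    (@UniformSpace.toTopologicalSpace _ (@PseudoMetricSpace.toUniformSpace _
      (@SeminormedAddCommGroup.toPseudoMetricSpace _ (@NormedAddCommGroup.toSeminormedAddCommGroup _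
        Matrix.frobeniusNormedAddCommGroup))))
  let μ : Measure (Matrix (Fin m) (Fin d) ℝ) := Measure.addHaar
  have hballpos : 0 < μ (Metric.ball (0 : Matrix (Fin m) (Fin d) ℝ) r) :=
    Metric.isOpen_ball.measure_pos μ (Metric.nonempty_ball.mpr hr)
  -- some Aₙ has positive measure
  obtain ⟨n, hn⟩ : ∃ n, 0 < μ (A n) := by
    by_contra h
    push_neg at h
    have : μ (⋃ n, A n) = 0 := measure_iUnion_null fun n => le_antisymm (h n) (by positivity)
    exact absurd (le_trans (measure_mono hAunion) this.le) (not_le.mpr hballpos)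
  -- Steinhaus
  have hsub : A n - A n ∈ nhds (0 : Matrix (Fin m) (Fin d) ℝ) :=
    μ.sub_mem_nhds_zero_of_addHaar_pos (A n) (hAmeas n) hn
  obtain ⟨δ, hδ, hδsub⟩ := Metric.mem_nhds_iff.mp hsub
  refine ⟨δ / 4, by linarith, ?_⟩
  have hbound : ∀ ξ ∈ Metric.closedBall (0 : Matrix (Fin m) (Fin d) ℝ) (δ / 4), L ξ ≤ C * (1 + n + n) := by
    intro ξ hξ
    have h2ξ : (2 : ℝ) • ξ ∈ Metric.ball (0 : Matrix (Fin m) (Fin d) ℝ) δ := by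
      rw [Metric.mem_closedBall, dist_zero_right] at hξ
      rw [Metric.mem_ball, dist_zero_right, norm_smul]
      simp only [Real.norm_ofNat]
      linarith
    obtain ⟨x, hx, y, hy, hxy⟩ := Set.mem_sub.mp (hδsub h2ξ)
    have key : ξ = (1/2 : ℝ) • x + (1 - 1/2 : ℝ) • (-y) := by
      have : (2 : ℝ) • ξ = x - y := hxy.symm
      have h := congrArg (fun z => (1/2 : ℝ) • z) this
      simp only [smul_smul] at h
      norm_num at h
      rw [h]
      norm_num
      module
    calc L ξ = L ((1/2 : ℝ) • x + (1 - 1/2 : ℝ) • (-y)) := by rw [← key]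
      _ ≤ C * (1 + L x + L (-y)) := hL x (-y) (1/2) (by norm_num)
      _ ≤ C * (1 + n + n) := by
          gcongr
          · exact hx.2.1
          · exact hy.2.2
  have : (⨆ ξ ∈ Metric.closedBall (0 : Matrix (Fin m) (Fin d) ℝ) (δ / 4), L ξ) ≤ C * (1 + n + n) := by
    exact iSup₂_le hbound
  refine lt_of_le_of_lt this ?_
  exact ENNReal.mul_lt_top hCtop.lt_top
    (by simp [ENNReal.add_lt_top, ENNReal.natCast_lt_top])
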